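/- Robins' g-formula for two-stage treatments: in the model T = τ(U,X), R = ρ(V,X,T), X' = ξ(W,X,T,R), T' = τ'(U',X',T,R), R' = ρ'(V',X',T',T) with U,U',V,V',W independent standard uniforms conditionally independent given X and all variables discrete, the intervention distribution satisfies P(ρ'(V',ξ(W,X,t,ρ(V,X,t)),t',t) ≤ r') = Σ_{r,x,x'} P(R'≤r' | X=x,T=t,R=r,X'=x',T'=t')·P(X'=x' | X=x,T=t,R=r)·P(R=r | X=x,T=t)·P(X=x). -/

import Mathlib

open MeasureTheory ProbabilityTheory

/-- Robins' g-formula for two-stage treatments: in the model `T = τ(U,X)`,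
`R = ρ(V,X,T)`, `X' = ξ(W,X,T,R)`, `T' = τ'(U',X',T,R)`, `R' = ρ'(V',X',T',T)`
with `U,U',V,V',W` standard uniforms that are mutually independent
conditionally on `X`, the law of the potential outcome
`ρ'(V', ξ(W,X,t,ρ(V,X,t)), t', t)` is given by the g-formula. -/
theorem robins_g_formula
    {Ω 𝒳 𝒯 ℛ 𝒳' 𝒯' : Type*} [MeasurableSpace Ω]
    [MeasurableSpace 𝒳] [MeasurableSingletonClass 𝒳] [Countable 𝒳]
    [MeasurableSpace 𝒯] [MeasurableSingletonClass 𝒯] [Countable 𝒯]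
    [MeasurableSpace ℛ] [MeasurableSingletonClass ℛ] [Countable ℛ]
    [MeasurableSpace 𝒳'] [MeasurableSingletonClass 𝒳'] [Countable 𝒳']
    [MeasurableSpace 𝒯'] [MeasurableSingletonClass 𝒯'] [Countable 𝒯']
    (μ : Measure Ω) [IsProbabilityMeasure μ]
    (X : Ω → 𝒳) (hXmeas : Measurable X)
    (U U' V V' W : Ω → ℝ)
    (hU : Measurable U) (hU' : Measurable U') (hV : Measurable V)
    (hV' : Measurable V') (hW : Measurable W)
    (hcondindep : ∀ x : 𝒳, 0 < μ {ω | X ω = x} →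
      iIndepFun (m := fun _ => (inferInstance : MeasurableSpace ℝ))
        ![U, U', V, V', W] (μ[|{ω | X ω = x}]))
    (hcondunif : ∀ x : 𝒳, 0 < μ {ω | X ω = x} → ∀ i : Fin 5,
      (μ[|{ω | X ω = x}]).map (![U, U', V, V', W] i)
        = volume.restrict (Set.Icc (0 : ℝ) 1))
    (τ : ℝ → 𝒳 → 𝒯) (ρ : ℝ → 𝒳 → 𝒯 → ℛ) (ξ : ℝ → 𝒳 → 𝒯 → ℛ → 𝒳')
    (τ' : ℝ → 𝒳' → 𝒯 → ℛ → 𝒯') (ρ' : ℝ → 𝒳' → 𝒯' → 𝒯 → ℝ)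
    (hτ : Measurable fun p : ℝ × 𝒳 => τ p.1 p.2)
    (hρ : Measurable fun p : ℝ × 𝒳 × 𝒯 => ρ p.1 p.2.1 p.2.2)
    (hξ : Measurable fun p : ℝ × 𝒳 × 𝒯 × ℛ => ξ p.1 p.2.1 p.2.2.1 p.2.2.2)
    (hτ' : Measurable fun p : ℝ × 𝒳' × 𝒯 × ℛ => τ' p.1 p.2.1 p.2.2.1 p.2.2.2)
    (hρ' : Measurable fun p : ℝ × 𝒳' × 𝒯' × 𝒯 => ρ' p.1 p.2.1 p.2.2.1 p.2.2.2)
    (T : Ω → 𝒯) (hT : ∀ ω, T ω = τ (U ω) (X ω))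
    (R : Ω → ℛ) (hR : ∀ ω, R ω = ρ (V ω) (X ω) (T ω))
    (X' : Ω → 𝒳') (hX' : ∀ ω, X' ω = ξ (W ω) (X ω) (T ω) (R ω))
    (T' : Ω → 𝒯') (hT' : ∀ ω, T' ω = τ' (U' ω) (X' ω) (T ω) (R ω))
    (R' : Ω → ℝ) (hR' : ∀ ω, R' ω = ρ' (V' ω) (X' ω) (T' ω) (T ω))
    (t : 𝒯) (t' : 𝒯') (r' : ℝ)
    (hpos : ∀ (r : ℛ) (x : 𝒳) (x' : 𝒳'),
      0 < μ {ω | X ω = x ∧ T ω = t ∧ R ω = r ∧ X' ω = x' ∧ T' ω = t'}) :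
    μ {ω | ρ' (V' ω) (ξ (W ω) (X ω) t (ρ (V ω) (X ω) t)) t' t ≤ r'}
      = ∑' (r : ℛ) (x : 𝒳) (x' : 𝒳'),
          μ[|{ω | X ω = x ∧ T ω = t ∧ R ω = r ∧ X' ω = x' ∧ T' ω = t'}]
              {ω | R' ω ≤ r'} *
          μ[|{ω | X ω = x ∧ T ω = t ∧ R ω = r}] {ω | X' ω = x'} *
          μ[|{ω | X ω = x ∧ T ω = t}] {ω | R ω = r} *
          μ {ω | X ω = x} := by
  classical
  -- measurability of the slice functions
  have hτx : ∀ x : 𝒳, Measurable fun u : ℝ => τ u x := fun x =>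
    hτ.comp (measurable_id.prodMk measurable_const)
  have hρx : ∀ x : 𝒳, Measurable fun v : ℝ => ρ v x t := fun x =>
    hρ.comp (measurable_id.prodMk
      (measurable_const : Measurable fun _ : ℝ => ((x, t) : 𝒳 × 𝒯)))
  have hξx : ∀ (x : 𝒳) (r : ℛ), Measurable fun w : ℝ => ξ w x t r := fun x r =>
    hξ.comp (measurable_id.prodMk
      (measurable_const : Measurable fun _ : ℝ => ((x, t, r) : 𝒳 × 𝒯 × ℛ)))
  have hτ'x : ∀ (x' : 𝒳') (r : ℛ), Measurable fun u : ℝ => τ' u x' t r := fun x' r =>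
    hτ'.comp (measurable_id.prodMk
      (measurable_const : Measurable fun _ : ℝ => ((x', t, r) : 𝒳' × 𝒯 × ℛ)))
  have hρ'x : ∀ x' : 𝒳', Measurable fun v : ℝ => ρ' v x' t' t := fun x' =>
    hρ'.comp (measurable_id.prodMk
      (measurable_const : Measurable fun _ : ℝ => ((x', t', t) : 𝒳' × 𝒯' × 𝒯)))
  have mAU : ∀ x : 𝒳, MeasurableSet {u : ℝ | τ u x = t} := fun x =>
    hτx x (measurableSet_singleton t)
  have mAV : ∀ (x : 𝒳) (r : ℛ), MeasurableSet {v : ℝ | ρ v x t = r} := fun x r =>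
    hρx x (measurableSet_singleton r)
  have mAW : ∀ (x : 𝒳) (r : ℛ) (x' : 𝒳'), MeasurableSet {w : ℝ | ξ w x t r = x'} :=
    fun x r x' => hξx x r (measurableSet_singleton x')
  have mAU' : ∀ (x' : 𝒳') (r : ℛ), MeasurableSet {u : ℝ | τ' u x' t r = t'} :=
    fun x' r => hτ'x x' r (measurableSet_singleton t')
  have mAV' : ∀ x' : 𝒳', MeasurableSet {v : ℝ | ρ' v x' t' t ≤ r'} := fun x' =>
    hρ'x x' measurableSet_Iic
  have hSxm : ∀ x : 𝒳, MeasurableSet {ω | X ω = x} := fun x =>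
    hXmeas (measurableSet_singleton x)
  -- set identities
  have hE1 : ∀ x : 𝒳, {ω | X ω = x ∧ T ω = t}
      = {ω | X ω = x} ∩ U ⁻¹' {u | τ u x = t} := by
    intro x; ext ω
    simp only [Set.mem_setOf_eq, Set.mem_inter_iff, Set.mem_preimage, hT ω]
    constructor
    · rintro ⟨rfl, h⟩; exact ⟨rfl, h⟩
    · rintro ⟨rfl, h⟩; exact ⟨rfl, h⟩
  have hE2 : ∀ (x : 𝒳) (r : ℛ), {ω | X ω = x ∧ T ω = t ∧ R ω = r}
      = {ω | X ω = x} ∩ (U ⁻¹' {u | τ u x = t} ∩ V ⁻¹' {v | ρ v x t = r}) := by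
    intro x r; ext ω
    simp only [Set.mem_setOf_eq, Set.mem_inter_iff, Set.mem_preimage, hR ω, hT ω]
    constructor
    · rintro ⟨rfl, h1, h2⟩; rw [h1] at h2; exact ⟨rfl, h1, h2⟩
    · rintro ⟨rfl, h1, h2⟩
      refine ⟨rfl, h1, ?_⟩
      rw [h1]; exact h2
  have hE3 : ∀ (x : 𝒳) (r : ℛ) (x' : 𝒳'), {ω | X ω = x ∧ T ω = t ∧ R ω = r ∧ X' ω = x'}
      = {ω | X ω = x} ∩ (U ⁻¹' {u | τ u x = t} ∩
          (V ⁻¹' {v | ρ v x t = r} ∩ W ⁻¹' {w | ξ w x t r = x'})) := by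
    intro x r x'; ext ω
    simp only [Set.mem_setOf_eq, Set.mem_inter_iff, Set.mem_preimage, hX' ω, hR ω, hT ω]
    constructor
    · rintro ⟨rfl, h1, h2, h3⟩
      rw [h1] at h2 h3; rw [h2] at h3
      exact ⟨rfl, h1, h2, h3⟩
    · rintro ⟨rfl, h1, h2, h3⟩
      simp [h1, h2, h3]
  have hE4 : ∀ (x : 𝒳) (r : ℛ) (x' : 𝒳'),
      {ω | X ω = x ∧ T ω = t ∧ R ω = r ∧ X' ω = x' ∧ T' ω = t'}
      = {ω | X ω = x} ∩ (U ⁻¹' {u | τ u x = t} ∩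
          (U' ⁻¹' {u | τ' u x' t r = t'} ∩
            (V ⁻¹' {v | ρ v x t = r} ∩ W ⁻¹' {w | ξ w x t r = x'}))) := by
    intro x r x'; ext ω
    simp only [Set.mem_setOf_eq, Set.mem_inter_iff, Set.mem_preimage, hT' ω, hX' ω, hR ω, hT ω]
    constructor
    · rintro ⟨rfl, h1, h2, h3, h4⟩
      rw [h1] at h2 h3 h4; rw [h2] at h3 h4; rw [h3] at h4
      exact ⟨rfl, h1, h4, h2, h3⟩
    · rintro ⟨rfl, h1, h4, h2, h3⟩
      simp [h1, h2, h3, h4]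
  have hE5 : ∀ (x : 𝒳) (r : ℛ) (x' : 𝒳'),
      {ω | X ω = x ∧ T ω = t ∧ R ω = r ∧ X' ω = x' ∧ T' ω = t'} ∩ {ω | R' ω ≤ r'}
      = {ω | X ω = x} ∩ (U ⁻¹' {u | τ u x = t} ∩
          (U' ⁻¹' {u | τ' u x' t r = t'} ∩
            (V ⁻¹' {v | ρ v x t = r} ∩
              (V' ⁻¹' {v | ρ' v x' t' t ≤ r'} ∩ W ⁻¹' {w | ξ w x t r = x'})))) := by
    intro x r x'; ext ω
    simp only [Set.mem_setOf_eq, Set.mem_inter_iff, Set.mem_preimage, hR' ω, hT' ω, hX' ω,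
      hR ω, hT ω]
    constructor
    · rintro ⟨⟨rfl, h1, h2, h3, h4⟩, h5⟩
      rw [h1] at h2 h3 h4 h5; rw [h2] at h3 h4 h5; rw [h3] at h4 h5; rw [h4] at h5
      exact ⟨rfl, h1, h4, h2, h5, h3⟩
    · rintro ⟨rfl, h1, h4, h2, h5, h3⟩
      simp [h1, h2, h3, h4, h5]
  -- the per-term identity
  have key : ∀ (r : ℛ) (x : 𝒳) (x' : 𝒳'),
      μ ({ω | X ω = x} ∩ (V ⁻¹' {v | ρ v x t = r} ∩
          (V' ⁻¹' {v | ρ' v x' t' t ≤ r'} ∩ W ⁻¹' {w | ξ w x t r = x'})))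
        = μ[|{ω | X ω = x ∧ T ω = t ∧ R ω = r ∧ X' ω = x' ∧ T' ω = t'}]
              {ω | R' ω ≤ r'} *
          μ[|{ω | X ω = x ∧ T ω = t ∧ R ω = r}] {ω | X' ω = x'} *
          μ[|{ω | X ω = x ∧ T ω = t}] {ω | R ω = r} *
          μ {ω | X ω = x} := by
    intro r x x'
    have hpos4 := hpos r x x'
    have hsubx : {ω | X ω = x ∧ T ω = t ∧ R ω = r ∧ X' ω = x' ∧ T' ω = t'}
        ⊆ {ω | X ω = x} := fun ω h => h.1
    have hxpos : 0 < μ {ω | X ω = x} := lt_of_lt_of_le hpos4 (measure_mono hsubx)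
    haveI hprob : IsProbabilityMeasure (μ[|{ω | X ω = x}]) :=
      cond_isProbabilityMeasure hxpos.ne'
    have indep5 : ∀ (s0 s1 s2 s3 s4 : Set ℝ), MeasurableSet s0 → MeasurableSet s1 →
        MeasurableSet s2 → MeasurableSet s3 → MeasurableSet s4 →
        (μ[|{ω | X ω = x}]) (U ⁻¹' s0 ∩ (U' ⁻¹' s1 ∩ (V ⁻¹' s2 ∩ (V' ⁻¹' s3 ∩ W ⁻¹' s4))))
          = (μ[|{ω | X ω = x}]) (U ⁻¹' s0) * (μ[|{ω | X ω = x}]) (U' ⁻¹' s1) *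
            (μ[|{ω | X ω = x}]) (V ⁻¹' s2) * (μ[|{ω | X ω = x}]) (V' ⁻¹' s3) *
            (μ[|{ω | X ω = x}]) (W ⁻¹' s4) := by
      intro s0 s1 s2 s3 s4 h0 h1 h2 h3 h4
      have H := (hcondindep x hxpos).measure_inter_preimage_eq_mul (S := Finset.univ)
        (sets := ![s0, s1, s2, s3, s4]) (fun i _ => by fin_cases i <;> assumption)
      have hL : (⋂ i ∈ (Finset.univ : Finset (Fin 5)),
          ![U, U', V, V', W] i ⁻¹' ![s0, s1, s2, s3, s4] i)
          = U ⁻¹' s0 ∩ (U' ⁻¹' s1 ∩ (V ⁻¹' s2 ∩ (V' ⁻¹' s3 ∩ W ⁻¹' s4))) := by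
        ext ω; simp [Fin.forall_fin_succ, and_assoc] <;> tauto
      rw [hL] at H
      rw [H, Fin.prod_univ_five]
      simp
    have hinterXS : ∀ S : Set Ω,
        μ ({ω | X ω = x} ∩ S) = μ {ω | X ω = x} * (μ[|{ω | X ω = x}]) S := by
      intro S
      rw [cond_apply (hSxm x), ← mul_assoc,
        ENNReal.mul_inv_cancel hxpos.ne' (measure_ne_top μ _), one_mul]
    -- products
    have hP2 : (μ[|{ω | X ω = x}]) (U ⁻¹' {u | τ u x = t} ∩ V ⁻¹' {v | ρ v x t = r})
        = (μ[|{ω | X ω = x}]) (U ⁻¹' {u | τ u x = t}) *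
          (μ[|{ω | X ω = x}]) (V ⁻¹' {v | ρ v x t = r}) := by
      simpa using indep5 {u | τ u x = t} Set.univ {v | ρ v x t = r} Set.univ Set.univ
        (mAU x) .univ (mAV x r) .univ .univ
    have hP3 : (μ[|{ω | X ω = x}]) (U ⁻¹' {u | τ u x = t} ∩
          (V ⁻¹' {v | ρ v x t = r} ∩ W ⁻¹' {w | ξ w x t r = x'}))
        = (μ[|{ω | X ω = x}]) (U ⁻¹' {u | τ u x = t}) *
          (μ[|{ω | X ω = x}]) (V ⁻¹' {v | ρ v x t = r}) *
          (μ[|{ω | X ω = x}]) (W ⁻¹' {w | ξ w x t r = x'}) := by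
      simpa using indep5 {u | τ u x = t} Set.univ {v | ρ v x t = r} Set.univ
        {w | ξ w x t r = x'} (mAU x) .univ (mAV x r) .univ (mAW x r x')
    have hP4 : (μ[|{ω | X ω = x}]) (U ⁻¹' {u | τ u x = t} ∩
          (U' ⁻¹' {u | τ' u x' t r = t'} ∩
            (V ⁻¹' {v | ρ v x t = r} ∩ W ⁻¹' {w | ξ w x t r = x'})))
        = (μ[|{ω | X ω = x}]) (U ⁻¹' {u | τ u x = t}) *
          (μ[|{ω | X ω = x}]) (U' ⁻¹' {u | τ' u x' t r = t'}) *
          (μ[|{ω | X ω = x}]) (V ⁻¹' {v | ρ v x t = r}) *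
          (μ[|{ω | X ω = x}]) (W ⁻¹' {w | ξ w x t r = x'}) := by
      simpa using indep5 {u | τ u x = t} {u | τ' u x' t r = t'} {v | ρ v x t = r} Set.univ
        {w | ξ w x t r = x'} (mAU x) (mAU' x' r) (mAV x r) .univ (mAW x r x')
    have hP5 : (μ[|{ω | X ω = x}]) (U ⁻¹' {u | τ u x = t} ∩
          (U' ⁻¹' {u | τ' u x' t r = t'} ∩
            (V ⁻¹' {v | ρ v x t = r} ∩
              (V' ⁻¹' {v | ρ' v x' t' t ≤ r'} ∩ W ⁻¹' {w | ξ w x t r = x'}))))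
        = (μ[|{ω | X ω = x}]) (U ⁻¹' {u | τ u x = t}) *
          (μ[|{ω | X ω = x}]) (U' ⁻¹' {u | τ' u x' t r = t'}) *
          (μ[|{ω | X ω = x}]) (V ⁻¹' {v | ρ v x t = r}) *
          (μ[|{ω | X ω = x}]) (V' ⁻¹' {v | ρ' v x' t' t ≤ r'}) *
          (μ[|{ω | X ω = x}]) (W ⁻¹' {w | ξ w x t r = x'}) :=
      indep5 {u | τ u x = t} {u | τ' u x' t r = t'} {v | ρ v x t = r}
        {v | ρ' v x' t' t ≤ r'} {w | ξ w x t r = x'}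
        (mAU x) (mAU' x' r) (mAV x r) (mAV' x') (mAW x r x')
    have hPF : (μ[|{ω | X ω = x}]) (V ⁻¹' {v | ρ v x t = r} ∩
          (V' ⁻¹' {v | ρ' v x' t' t ≤ r'} ∩ W ⁻¹' {w | ξ w x t r = x'}))
        = (μ[|{ω | X ω = x}]) (V ⁻¹' {v | ρ v x t = r}) *
          (μ[|{ω | X ω = x}]) (V' ⁻¹' {v | ρ' v x' t' t ≤ r'}) *
          (μ[|{ω | X ω = x}]) (W ⁻¹' {w | ξ w x t r = x'}) := by
      simpa using indep5 Set.univ Set.univ {v | ρ v x t = r} {v | ρ' v x' t' t ≤ r'}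
        {w | ξ w x t r = x'} .univ .univ (mAV x r) (mAV' x') (mAW x r x')
    -- abbreviations
    set p := μ {ω | X ω = x} with hp
    set a := (μ[|{ω | X ω = x}]) (U ⁻¹' {u | τ u x = t}) with ha
    set b := (μ[|{ω | X ω = x}]) (V ⁻¹' {v | ρ v x t = r}) with hb
    set c := (μ[|{ω | X ω = x}]) (W ⁻¹' {w | ξ w x t r = x'}) with hc
    set d := (μ[|{ω | X ω = x}]) (U' ⁻¹' {u | τ' u x' t r = t'}) with hd
    set e := (μ[|{ω | X ω = x}]) (V' ⁻¹' {v | ρ' v x' t' t ≤ r'}) with he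
    -- measures of the events
    have mE1 : MeasurableSet {ω | X ω = x ∧ T ω = t} := by
      rw [hE1 x]; exact (hSxm x).inter (hU (mAU x))
    have mE2 : MeasurableSet {ω | X ω = x ∧ T ω = t ∧ R ω = r} := by
      rw [hE2 x r]; exact (hSxm x).inter ((hU (mAU x)).inter (hV (mAV x r)))
    have mE4 : MeasurableSet {ω | X ω = x ∧ T ω = t ∧ R ω = r ∧ X' ω = x' ∧ T' ω = t'} := by
      rw [hE4 x r x']
      exact (hSxm x).inter ((hU (mAU x)).inter ((hU' (mAU' x' r)).inter
        ((hV (mAV x r)).inter (hW (mAW x r x')))))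
    have μE1 : μ {ω | X ω = x ∧ T ω = t} = p * a := by
      rw [hE1 x, hinterXS]
    have μE2 : μ {ω | X ω = x ∧ T ω = t ∧ R ω = r} = p * (a * b) := by
      rw [hE2 x r, hinterXS, hP2]
    have μE3 : μ {ω | X ω = x ∧ T ω = t ∧ R ω = r ∧ X' ω = x'} = p * (a * b * c) := by
      rw [hE3 x r x', hinterXS, hP3]
    have μE4 : μ {ω | X ω = x ∧ T ω = t ∧ R ω = r ∧ X' ω = x' ∧ T' ω = t'}
        = p * (a * d * b * c) := by
      rw [hE4 x r x', hinterXS, hP4]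
    have μE5 : μ ({ω | X ω = x ∧ T ω = t ∧ R ω = r ∧ X' ω = x' ∧ T' ω = t'} ∩
        {ω | R' ω ≤ r'}) = p * (a * d * b * e * c) := by
      rw [hE5 x r x', hinterXS, hP5]
    -- positivity and finiteness
    have hq4ne0 : p * (a * d * b * c) ≠ 0 := by rw [← μE4]; exact hpos4.ne'
    have hq4top : p * (a * d * b * c) ≠ ⊤ := by rw [← μE4]; exact measure_ne_top μ _
    have hsub1 : {ω | X ω = x ∧ T ω = t ∧ R ω = r ∧ X' ω = x' ∧ T' ω = t'}
        ⊆ {ω | X ω = x ∧ T ω = t} := fun ω h => ⟨h.1, h.2.1⟩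
    have hsub2 : {ω | X ω = x ∧ T ω = t ∧ R ω = r ∧ X' ω = x' ∧ T' ω = t'}
        ⊆ {ω | X ω = x ∧ T ω = t ∧ R ω = r} := fun ω h => ⟨h.1, h.2.1, h.2.2.1⟩
    have hq1ne0 : p * a ≠ 0 := by
      rw [← μE1]; exact (lt_of_lt_of_le hpos4 (measure_mono hsub1)).ne'
    have hq1top : p * a ≠ ⊤ := by rw [← μE1]; exact measure_ne_top μ _
    have hq2ne0 : p * (a * b) ≠ 0 := by
      rw [← μE2]; exact (lt_of_lt_of_le hpos4 (measure_mono hsub2)).ne'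
    have hq2top : p * (a * b) ≠ ⊤ := by rw [← μE2]; exact measure_ne_top μ _
    have cancel : ∀ q m : ENNReal, q ≠ 0 → q ≠ ⊤ → q⁻¹ * (q * m) = m := by
      intro q m h0 htop
      rw [← mul_assoc, ENNReal.inv_mul_cancel h0 htop, one_mul]
    -- the three conditional probabilities
    have cond1 : μ[|{ω | X ω = x ∧ T ω = t}] {ω | R ω = r} = b := by
      have hset : {ω | X ω = x ∧ T ω = t} ∩ {ω | R ω = r}
          = {ω | X ω = x ∧ T ω = t ∧ R ω = r} := by
        ext ω; simp only [Set.mem_inter_iff, Set.mem_setOf_eq, and_assoc]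
      rw [cond_apply mE1, hset, μE2, μE1,
        show p * (a * b) = (p * a) * b by ring, cancel _ _ hq1ne0 hq1top]
    have cond2 : μ[|{ω | X ω = x ∧ T ω = t ∧ R ω = r}] {ω | X' ω = x'} = c := by
      have hset : {ω | X ω = x ∧ T ω = t ∧ R ω = r} ∩ {ω | X' ω = x'}
          = {ω | X ω = x ∧ T ω = t ∧ R ω = r ∧ X' ω = x'} := by
        ext ω; simp only [Set.mem_inter_iff, Set.mem_setOf_eq, and_assoc]
      rw [cond_apply mE2, hset, μE3, μE2,
        show p * (a * b * c) = (p * (a * b)) * c by ring, cancel _ _ hq2ne0 hq2top]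
    have cond3 : μ[|{ω | X ω = x ∧ T ω = t ∧ R ω = r ∧ X' ω = x' ∧ T' ω = t'}]
        {ω | R' ω ≤ r'} = e := by
      rw [cond_apply mE4, μE5, μE4,
        show p * (a * d * b * e * c) = (p * (a * d * b * c)) * e by ring,
        cancel _ _ hq4ne0 hq4top]
    rw [cond1, cond2, cond3, hinterXS, hPF]
    ring
  -- decomposition of the target event
  have hdecomp : {ω | ρ' (V' ω) (ξ (W ω) (X ω) t (ρ (V ω) (X ω) t)) t' t ≤ r'}
      = ⋃ q : ℛ × 𝒳 × 𝒳', {ω | X ω = q.2.1} ∩ (V ⁻¹' {v | ρ v q.2.1 t = q.1} ∩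
          (V' ⁻¹' {v | ρ' v q.2.2 t' t ≤ r'} ∩ W ⁻¹' {w | ξ w q.2.1 t q.1 = q.2.2})) := by
    ext ω
    simp only [Set.mem_setOf_eq, Set.mem_iUnion, Set.mem_inter_iff, Set.mem_preimage]
    constructor
    · intro h
      exact ⟨⟨ρ (V ω) (X ω) t, X ω, ξ (W ω) (X ω) t (ρ (V ω) (X ω) t)⟩, rfl, rfl, h, rfl⟩
    · rintro ⟨⟨r, x, x'⟩, hx, hr, hle, hw⟩
      dsimp only at hx hr hle hw
      subst hx; subst hr; subst hw
      exact hle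
  have hmeasF : ∀ q : ℛ × 𝒳 × 𝒳',
      MeasurableSet ({ω | X ω = q.2.1} ∩ (V ⁻¹' {v | ρ v q.2.1 t = q.1} ∩
        (V' ⁻¹' {v | ρ' v q.2.2 t' t ≤ r'} ∩ W ⁻¹' {w | ξ w q.2.1 t q.1 = q.2.2}))) :=
    fun q => (hSxm q.2.1).inter ((hV (mAV q.2.1 q.1)).inter
      ((hV' (mAV' q.2.2)).inter (hW (mAW q.2.1 q.1 q.2.2))))
  have hdisj : Pairwise (Function.onFun Disjoint
      fun q : ℛ × 𝒳 × 𝒳' => {ω | X ω = q.2.1} ∩ (V ⁻¹' {v | ρ v q.2.1 t = q.1} ∩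
        (V' ⁻¹' {v | ρ' v q.2.2 t' t ≤ r'} ∩ W ⁻¹' {w | ξ w q.2.1 t q.1 = q.2.2}))) := by
    rintro ⟨r1, x1, x1'⟩ ⟨r2, x2, x2'⟩ hne
    refine Set.disjoint_left.mpr ?_
    rintro ω ⟨hx1, hr1, hle1, hw1⟩ ⟨hx2, hr2, hle2, hw2⟩
    dsimp only at hx1 hr1 hle1 hw1 hx2 hr2 hle2 hw2
    apply hne
    subst hx1; subst hr1; subst hw1
    subst hx2; subst hr2; subst hw2
    rfl
  rw [hdecomp, measure_iUnion hdisj hmeasF, ENNReal.tsum_prod']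
  refine tsum_congr fun r => ?_
  rw [ENNReal.tsum_prod']
  refine tsum_congr fun x => ?_
  refine tsum_congr fun x' => ?_
  exact key r x x'
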